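/- Predecessor reduction correctness: let X = {x₁ < ... < x_m} ⊆ [2,u], and let S be the concatenation of x₁ copies of G_{x₁}, then x₂−x₁ copies of G_{x₂}, ..., then x_m−x_{m−1} copies of G_{x_m}, where G_i = A·$^{i−2}·B·$^{u} and Q = {A,B}. Then for every x ∈ [2,u]: lmco-prefix-sum ∑_{i=2}^{x} δ(i) equals the predecessor of x in X (the largest element of X that is ≤ x) if one exists, and equals 0 if x < x₁. -/

import Mathlib

open Finset

/-- `[i,j]` is a co-occurrence of `Q` in the length-`n` string `S` (1-indexed):
`1 ≤ i ≤ j ≤ n` and every character of `Q` occurs in `S[i..j]`. -/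
def Cooc {α : Type*} (n : ℕ) (S : ℕ → α) (Q : Finset α) (i j : ℕ) : Prop :=
  1 ≤ i ∧ i ≤ j ∧ j ≤ n ∧ ∀ c ∈ Q, ∃ k, i ≤ k ∧ k ≤ j ∧ S k = c

/-- `[i,j]` is a left-minimal co-occurrence: a co-occurrence such that `[i+1,j]` is not. -/
def LeftMinCooc {α : Type*} (n : ℕ) (S : ℕ → α) (Q : Finset α) (i j : ℕ) : Prop :=
  Cooc n S Q i j ∧ ¬ Cooc n S Q (i+1) j

/-- `[i,j]` is a minimal co-occurrence: a co-occurrence such that neither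
`[i+1,j]` nor `[i,j-1]` is a co-occurrence. -/
def MinCooc {α : Type*} (n : ℕ) (S : ℕ → α) (Q : Finset α) (i j : ℕ) : Prop :=
  Cooc n S Q i j ∧ ¬ Cooc n S Q (i+1) j ∧ ¬ Cooc n S Q i (j-1)

/-- `lmco n S Q w`: number of left-minimal co-occurrences of `Q` in `S` of length `w`. -/
noncomputable def lmco {α : Type*} (n : ℕ) (S : ℕ → α) (Q : Finset α) (w : ℕ) : ℕ :=
  {p : ℕ × ℕ | LeftMinCooc n S Q p.1 p.2 ∧ p.2 - p.1 + 1 = w}.ncard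

/-- `dlt n S Q i = lmco(i) - lmco(i-1)` as an integer. -/
noncomputable def dlt {α : Type*} (n : ℕ) (S : ℕ → α) (Q : Finset α) (i : ℕ) : ℤ :=
  (lmco n S Q i : ℤ) - (lmco n S Q (i-1) : ℤ)

/-- `coN n S Q w`: number of length-`w` co-occurrences of `Q` in `S`, i.e. the number of
windows `[k-w+1,k]` with `w ≤ k ≤ n` that are co-occurrences. -/
noncomputable def coN {α : Type*} (n : ℕ) (S : ℕ → α) (Q : Finset α) (w : ℕ) : ℕ :=
  {k : ℕ | w ≤ k ∧ k ≤ n ∧ Cooc n S Q (k - w + 1) k}.ncard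

/-- The increment gadget `G_i = A · $^{i-2} · B · $^{u}` (with `$` written `D`). -/
def Gadget {α : Type*} (A B D : α) (u i : ℕ) : List α :=
  A :: (List.replicate (i - 2) D ++ B :: List.replicate u D)

/-- Concatenation of `c 1` copies of `G_{e 1}`, then `c 2` copies of `G_{e 2}`, …,
then `c m` copies of `G_{e m}`. -/
def GadgetString {α : Type*} (A B D : α) (u m : ℕ) (e c : ℕ → ℕ) : List α :=
  ((List.range m).map (fun j => (List.replicate (c (j+1)) (Gadget A B D u (e (j+1)))).flatten)).flatten

namespace S18

variable {α : Type*} (A B D : α) (u : ℕ)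

def JJ (gl : List ℕ) : List α := (gl.map (Gadget A B D u)).flatten

def st (u : ℕ) (gl : List ℕ) (t : ℕ) : ℕ := ((gl.take t).map (· + u)).sum

lemma gadget_length (g : ℕ) (hg : 2 ≤ g) : (Gadget A B D u g).length = g + u := by
  simp [Gadget]; omega

lemma JJ_cons (g : ℕ) (gl : List ℕ) :
    JJ A B D u (g :: gl) = Gadget A B D u g ++ JJ A B D u gl := by
  simp [JJ]

lemma st_zero (gl : List ℕ) : st u gl 0 = 0 := by simp [st]

lemma st_cons_succ (g : ℕ) (gl : List ℕ) (t : ℕ) :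
    st u (g :: gl) (t + 1) = (g + u) + st u gl t := by
  simp [st]

lemma st_add_one (gl : List ℕ) (t : ℕ) (ht : t < gl.length) :
    st u gl (t + 1) = st u gl t + (gl.getD t 0 + u) := by
  induction gl generalizing t with
  | nil => simp at ht
  | cons g gl ih =>
    cases t with
    | zero => simp [st_cons_succ, st_zero]
    | succ t =>
      rw [st_cons_succ, st_cons_succ, ih t (by simpa using ht)]
      simp; ring

lemma JJ_length (gl : List ℕ) (hgl : ∀ g ∈ gl, 2 ≤ g) :
    (JJ A B D u gl).length = st u gl gl.length := by
  induction gl with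
  | nil => simp [JJ, st]
  | cons g gl ih =>
    rw [JJ_cons, List.length_append, gadget_length A B D u g (hgl g (by simp)),
      ih (fun g' hg' => hgl g' (by simp [hg'])), List.length_cons, st_cons_succ]

lemma st_mono_le (gl : List ℕ) (s t : ℕ) (h : s ≤ t) (ht : t ≤ gl.length) :
    st u gl s ≤ st u gl t := by
  induction t with
  | zero =>
    have hs : s = 0 := by omega
    subst hs; exact le_refl _
  | succ t ih =>
    rcases Nat.eq_or_lt_of_le h with rfl | h'
    · exact le_refl _
    · calc st u gl s ≤ st u gl t := ih (by omega) (by omega)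
        _ ≤ st u gl (t+1) := by rw [st_add_one u gl t (by omega)]; omega

lemma st_strict (hu : 1 ≤ u) (gl : List ℕ) (s t : ℕ) (h : s < t) (ht : t ≤ gl.length) :
    st u gl s < st u gl t := by
  cases t with
  | zero => omega
  | succ t =>
    calc st u gl s ≤ st u gl t := st_mono_le u gl s t (by omega) (by omega)
      _ < st u gl (t+1) := by rw [st_add_one u gl t (by omega)]; omega

lemma decomp (gl : List ℕ) (k : ℕ) (hk : k < st u gl gl.length) :
    ∃ t, t < gl.length ∧ st u gl t ≤ k ∧ k < st u gl t + (gl.getD t 0 + u) := by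
  induction gl generalizing k with
  | nil => simp [st] at hk
  | cons g gl ih =>
    by_cases hcase : k < g + u
    · exact ⟨0, by simp, by simp [st_zero], by simpa [st_zero] using hcase⟩
    · push_neg at hcase
      have hk' : k - (g + u) < st u gl gl.length := by
        rw [List.length_cons, st_cons_succ] at hk; omega
      obtain ⟨t, ht, h1, h2⟩ := ih (k - (g + u)) hk'
      refine ⟨t + 1, by simpa using ht, by rw [st_cons_succ]; omega, ?_⟩
      rw [st_cons_succ, List.getD_cons_succ]; omega


lemma gadget_getD (g : ℕ) (hg : 2 ≤ g) (r : ℕ) (hr : r < g + u) :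
    (Gadget A B D u g).getD r D = if r = 0 then A else if r + 1 = g then B else D := by
  cases r with
  | zero => simp [Gadget]
  | succ s =>
    rw [Gadget, List.getD_cons_succ]
    have hlen : (List.replicate (g - 2) D ++ B :: List.replicate u D).length = g - 1 + u := by
      simp; omega
    have hslen : s < g - 1 + u := by omega
    rcases lt_trichotomy s (g - 2) with hs | hs | hs
    · rw [List.getD_eq_getElem _ _ (by omega : s < (List.replicate (g - 2) D ++ B :: List.replicate u D).length),
        List.getElem_append_left (by simpa using hs), List.getElem_replicate]
      simp only [if_neg (by omega : ¬ s + 1 = 0), if_neg (by omega : ¬ s + 1 + 1 = g)]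
    · rw [List.getD_eq_getElem _ _ (by omega : s < (List.replicate (g - 2) D ++ B :: List.replicate u D).length),
        List.getElem_append_right (by simp; omega)]
      have : s - (List.replicate (g - 2) D).length = 0 := by simp; omega
      simp only [this, List.getElem_cons_zero]
      rw [if_neg (by omega : ¬ s + 1 = 0), if_pos (by omega : s + 1 + 1 = g)]
    · rw [List.getD_eq_getElem _ _ (by omega : s < (List.replicate (g - 2) D ++ B :: List.replicate u D).length),
        List.getElem_append_right (by simp; omega)]
      have h0 : s - (List.replicate (g - 2) D).length = (s - (g-2) - 1) + 1 := by simp; omega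
      simp only [h0, List.getElem_cons_succ, List.getElem_replicate]
      simp only [if_neg (by omega : ¬ s + 1 = 0), if_neg (by omega : ¬ s + 1 + 1 = g)]

lemma entry_ge (gl : List ℕ) (hgl : ∀ g ∈ gl, 2 ≤ g) (t : ℕ) (ht : t < gl.length) :
    2 ≤ gl.getD t 0 := by
  rw [List.getD_eq_getElem _ _ ht]
  exact hgl _ (List.getElem_mem ht)

lemma JJ_getD (gl : List ℕ) (hgl : ∀ g ∈ gl, 2 ≤ g) (t : ℕ) (ht : t < gl.length)
    (r : ℕ) (hr : r < gl.getD t 0 + u) :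
    (JJ A B D u gl).getD (st u gl t + r) D =
      if r = 0 then A else if r + 1 = gl.getD t 0 then B else D := by
  induction gl generalizing t with
  | nil => simp at ht
  | cons g gl ih =>
    have hg : 2 ≤ g := hgl g (by simp)
    have hgl' : ∀ g' ∈ gl, 2 ≤ g' := fun g' hg' => hgl g' (by simp [hg'])
    cases t with
    | zero =>
      rw [st_zero, Nat.zero_add, JJ_cons]
      have hr0 : r < g + u := by simpa using hr
      have hlt : r < (Gadget A B D u g).length := by
        rw [gadget_length A B D u g hg]; exact hr0
      rw [List.getD_eq_getElem _ _ (by simp [List.length_append]; omega),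
        List.getElem_append_left hlt, ← List.getD_eq_getElem _ D hlt,
        gadget_getD A B D u g hg r hr0]
      simp
    | succ t =>
      have ht' : t < gl.length := by simpa using ht
      have hr' : r < gl.getD t 0 + u := by simpa using hr
      have hq : st u gl t + r < (JJ A B D u gl).length := by
        rw [JJ_length A B D u gl hgl']
        calc st u gl t + r < st u gl t + (gl.getD t 0 + u) := by omega
          _ = st u gl (t+1) := (st_add_one u gl t ht').symm
          _ ≤ st u gl gl.length := st_mono_le u gl _ _ (by omega) (le_refl _)
      rw [st_cons_succ, JJ_cons]
      have hidx : (g + u) + st u gl t + r < (Gadget A B D u g ++ JJ A B D u gl).length := by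
        rw [List.length_append, gadget_length A B D u g hg]; omega
      rw [show (g + u) + st u gl t + r = (g + u) + (st u gl t + r) by ring] at hidx ⊢
      rw [List.getD_eq_getElem _ _ hidx,
        List.getElem_append_right (by rw [gadget_length A B D u g hg]; omega)]
      have hoff : (g + u) + (st u gl t + r) - (Gadget A B D u g).length = st u gl t + r := by
        rw [gadget_length A B D u g hg]; omega
      simp only [hoff]
      rw [← List.getD_eq_getElem _ D hq, ih hgl' t ht' hr']
      simp


lemma occA (hAB : A ≠ B) (hAD : A ≠ D) (gl : List ℕ) (hgl : ∀ g ∈ gl, 2 ≤ g)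
    (k : ℕ) (h1 : 1 ≤ k) (h2 : k ≤ (JJ A B D u gl).length) :
    (JJ A B D u gl).getD (k-1) D = A ↔ ∃ t, t < gl.length ∧ k = st u gl t + 1 := by
  rw [JJ_length A B D u gl hgl] at h2
  constructor
  · intro hA
    obtain ⟨t, ht, hle, hlt⟩ := decomp u gl (k-1) (by omega)
    set r := k - 1 - st u gl t with hrdef
    have hkr : k - 1 = st u gl t + r := by omega
    have hr : r < gl.getD t 0 + u := by omega
    rw [hkr, JJ_getD A B D u gl hgl t ht r hr] at hA
    by_cases h0 : r = 0
    · exact ⟨t, ht, by omega⟩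
    · rw [if_neg h0] at hA
      by_cases h1' : r + 1 = gl.getD t 0
      · rw [if_pos h1'] at hA; exact absurd hA.symm hAB
      · rw [if_neg h1'] at hA; exact absurd hA.symm hAD
  · rintro ⟨t, ht, rfl⟩
    have h0 : 0 < gl.getD t 0 + u := by have := entry_ge gl hgl t ht; omega
    have : st u gl t + 1 - 1 = st u gl t + 0 := by omega
    rw [this, JJ_getD A B D u gl hgl t ht 0 h0]
    simp

lemma occB (hAB : A ≠ B) (hBD : B ≠ D) (gl : List ℕ) (hgl : ∀ g ∈ gl, 2 ≤ g)
    (k : ℕ) (h1 : 1 ≤ k) (h2 : k ≤ (JJ A B D u gl).length) :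
    (JJ A B D u gl).getD (k-1) D = B ↔ ∃ t, t < gl.length ∧ k = st u gl t + gl.getD t 0 := by
  rw [JJ_length A B D u gl hgl] at h2
  constructor
  · intro hB
    obtain ⟨t, ht, hle, hlt⟩ := decomp u gl (k-1) (by omega)
    set r := k - 1 - st u gl t with hrdef
    have hkr : k - 1 = st u gl t + r := by omega
    have hr : r < gl.getD t 0 + u := by omega
    rw [hkr, JJ_getD A B D u gl hgl t ht r hr] at hB
    by_cases h0 : r = 0
    · rw [if_pos h0] at hB; exact absurd hB.symm hAB.symm
    · rw [if_neg h0] at hB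
      by_cases h1' : r + 1 = gl.getD t 0
      · exact ⟨t, ht, by omega⟩
      · rw [if_neg h1'] at hB; exact absurd hB.symm hBD
  · rintro ⟨t, ht, rfl⟩
    have hge := entry_ge gl hgl t ht
    have hr : gl.getD t 0 - 1 < gl.getD t 0 + u := by omega
    have : st u gl t + gl.getD t 0 - 1 = st u gl t + (gl.getD t 0 - 1) := by omega
    rw [this, JJ_getD A B D u gl hgl t ht _ hr,
      if_neg (by omega : ¬ gl.getD t 0 - 1 = 0), if_pos (by omega : gl.getD t 0 - 1 + 1 = gl.getD t 0)]




lemma countP_eq_card (gl : List ℕ) (p : ℕ → Bool) :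
    List.countP p gl
      = ((Finset.range gl.length).filter (fun t => p (gl.getD t 0) = true)).card := by
  induction gl with
  | nil => simp
  | cons g gl ih =>
    rw [List.countP_cons, ih, Finset.card_filter, Finset.card_filter, List.length_cons,
      Finset.sum_range_succ']
    simp only [List.getD_cons_succ, List.getD_cons_zero]

lemma lmco_one {α : Type*} [DecidableEq α] (A B : α) (hAB : A ≠ B) (n : ℕ) (S : ℕ → α) :
    lmco n S {A, B} 1 = 0 := by
  unfold lmco
  convert Set.ncard_empty (ℕ × ℕ)
  rw [Set.eq_empty_iff_forall_notMem]
  rintro ⟨i, j⟩ ⟨⟨⟨h1, h2, h3, h4⟩, _⟩, h5⟩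
  obtain ⟨kA, hk1, hk2, hk3⟩ := h4 A (by simp)
  obtain ⟨kB, hl1, hl2, hl3⟩ := h4 B (by simp)
  have e1 : kA = i := by omega
  have e2 : kB = i := by omega
  subst e1 e2
  exact hAB (hk3.symm.trans hl3)

variable {α : Type*} [DecidableEq α] (A B D : α) (u : ℕ)

lemma lmco_JJ (hAB : A ≠ B) (hAD : A ≠ D) (hBD : B ≠ D) (hu : 2 ≤ u)
    (gl : List ℕ) (hgl : ∀ g ∈ gl, 2 ≤ g) (w : ℕ) (hw2 : 2 ≤ w) (hwu : w ≤ u) :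
    lmco (JJ A B D u gl).length (fun k => (JJ A B D u gl).getD (k-1) D) {A, B} w
      = List.countP (fun g => decide (g ≤ w)) gl := by
  classical
  have hu1 : 1 ≤ u := by omega
  set n := (JJ A B D u gl).length with hn
  have hlen : n = st u gl gl.length := JJ_length A B D u gl hgl
  set S : ℕ → α := fun k => (JJ A B D u gl).getD (k-1) D with hS
  have hSA : ∀ k, 1 ≤ k → k ≤ n → (S k = A ↔ ∃ t, t < gl.length ∧ k = st u gl t + 1) :=
    fun k h1 h2 => occA A B D u hAB hAD gl hgl k h1 h2
  have hSB : ∀ k, 1 ≤ k → k ≤ n →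
      (S k = B ↔ ∃ t, t < gl.length ∧ k = st u gl t + gl.getD t 0) :=
    fun k h1 h2 => occB A B D u hAB hBD gl hgl k h1 h2
  set T : Finset ℕ := (Finset.range gl.length).filter (fun t => gl.getD t 0 ≤ w) with hT
  have hTmem : ∀ t, t ∈ T ↔ t < gl.length ∧ gl.getD t 0 ≤ w := by
    intro t; rw [hT, Finset.mem_filter, Finset.mem_range]
  have hseteq : {p : ℕ × ℕ | LeftMinCooc n S {A, B} p.1 p.2 ∧ p.2 - p.1 + 1 = w}
      = (fun t => (st u gl t + 1, st u gl t + w)) '' ↑T := by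
    ext ⟨i, j⟩
    simp only [Set.mem_setOf_eq, Set.mem_image, Finset.mem_coe]
    constructor
    · rintro ⟨⟨⟨h1, h2, h3, hocc⟩, hnot⟩, hwlen⟩
      have hij : j = i + (w - 1) := by omega
      obtain ⟨kA, hkA1, hkA2, hkA3⟩ := hocc A (by simp)
      obtain ⟨kB, hkB1, hkB2, hkB3⟩ := hocc B (by simp)
      have hmiss : (∀ k, i+1 ≤ k → k ≤ j → S k ≠ A) ∨ (∀ k, i+1 ≤ k → k ≤ j → S k ≠ B) := by
        by_contra hcon
        push_neg at hcon
        obtain ⟨⟨kA', ha1, ha2, ha3⟩, ⟨kB', hb1, hb2, hb3⟩⟩ := hcon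
        refine hnot ⟨by omega, by omega, h3, ?_⟩
        intro c hc
        rcases Finset.mem_insert.mp hc with rfl | hc
        · exact ⟨kA', ha1, ha2, ha3⟩
        · rw [Finset.mem_singleton] at hc; subst hc; exact ⟨kB', hb1, hb2, hb3⟩
      rcases hmiss with hmA | hmB
      · -- A occurs only at i
        have hkAi : kA = i := by
          by_contra hne
          exact hmA kA (by omega) hkA2 hkA3
        subst hkAi
        obtain ⟨t, ht, hit⟩ := (hSA kA (by omega) (by omega)).mp hkA3
        obtain ⟨t', ht', hkt'⟩ := (hSB kB (by omega) (by omega)).mp hkB3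
        have hg' := entry_ge gl hgl t' ht'
        have hg := entry_ge gl hgl t ht
        have htt' : t' = t := by
          rcases lt_trichotomy t' t with hlt | heq | hgt
          · exfalso
            have e1 : st u gl (t'+1) = st u gl t' + (gl.getD t' 0 + u) := st_add_one u gl t' ht'
            have e2 : st u gl (t'+1) ≤ st u gl t := st_mono_le u gl (t'+1) t (by omega) (by omega)
            omega
          · exact heq
          · exfalso
            have e1 : st u gl (t+1) = st u gl t + (gl.getD t 0 + u) := st_add_one u gl t ht
            have e2 : st u gl (t+1) ≤ st u gl t' := st_mono_le u gl (t+1) t' (by omega) (by omega)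
            omega
        subst htt'
        refine ⟨t', (hTmem t').mpr ⟨ht', by omega⟩, ?_⟩
        simp only [Prod.mk.injEq]
        omega
      · -- B occurs only at i
        have hkBi : kB = i := by
          by_contra hne
          exact hmB kB (by omega) hkB2 hkB3
        subst hkBi
        obtain ⟨t, ht, hit⟩ := (hSB kB (by omega) (by omega)).mp hkB3
        have hg := entry_ge gl hgl t ht
        have hkAne : kA ≠ kB := by
          intro h; rw [h] at hkA3; exact hAB (hkA3.symm.trans hkB3)
        obtain ⟨t', ht', hkt'⟩ := (hSA kA (by omega) (by omega)).mp hkA3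
        exfalso
        have htt' : t < t' := by
          by_contra hle
          have : st u gl t' ≤ st u gl t := st_mono_le u gl t' t (by omega) (by omega)
          omega
        have e1 : st u gl (t+1) = st u gl t + (gl.getD t 0 + u) := st_add_one u gl t ht
        have e2 : st u gl (t+1) ≤ st u gl t' := st_mono_le u gl (t+1) t' (by omega) (by omega)
        omega
    · rintro ⟨t, htT, heq⟩
      obtain ⟨ht, hgw⟩ := (hTmem t).mp htT
      have hg := entry_ge gl hgl t ht
      have e1 : st u gl (t+1) = st u gl t + (gl.getD t 0 + u) := st_add_one u gl t ht
      have e2 : st u gl (t+1) ≤ st u gl gl.length := st_mono_le u gl (t+1) _ (by omega) (le_refl _)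
      have hjn : st u gl t + w ≤ n := by omega
      simp only [Prod.mk.injEq] at heq
      obtain ⟨hi, hj⟩ := heq
      subst hi; subst hj
      refine ⟨⟨⟨by omega, by omega, hjn, ?_⟩, ?_⟩, by omega⟩
      · intro c hc
        rcases Finset.mem_insert.mp hc with rfl | hc
        · exact ⟨st u gl t + 1, le_refl _, by omega,
            (hSA (st u gl t + 1) (by omega) (by omega)).mpr ⟨t, ht, rfl⟩⟩
        · rw [Finset.mem_singleton] at hc; subst hc
          exact ⟨st u gl t + gl.getD t 0, by omega, by omega,
            (hSB (st u gl t + gl.getD t 0) (by omega) (by omega)).mpr ⟨t, ht, rfl⟩⟩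
      · rintro ⟨_, hij, hjn', hocc'⟩
        obtain ⟨kA, hkA1, hkA2, hkA3⟩ := hocc' A (by simp)
        obtain ⟨t'', ht'', hkt''⟩ := (hSA kA (by omega) (by omega)).mp hkA3
        have htlt : t < t'' := by
          by_contra hle
          have : st u gl t'' ≤ st u gl t := st_mono_le u gl t'' t (by omega) (by omega)
          omega
        have e3 : st u gl (t+1) ≤ st u gl t'' := st_mono_le u gl (t+1) t'' (by omega) (by omega)
        omega
  unfold lmco
  rw [hseteq, Set.ncard_image_of_injOn, Set.ncard_coe_finset]
  · rw [countP_eq_card]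
    congr 1
    apply Finset.filter_congr
    intro t _
    simp
  · intro t ht t' ht' heq
    rw [Finset.mem_coe, hTmem] at ht ht'
    simp only [Prod.mk.injEq] at heq
    rcases lt_trichotomy t t' with hlt | heq' | hgt
    · have := st_strict u hu1 gl t t' hlt (by omega)
      omega
    · exact heq'
    · have := st_strict u hu1 gl t' t hgt (by omega)
      omega



lemma telescope (f : ℕ → ℤ) (v : ℕ) (h : 2 ≤ v) :
    ∑ i ∈ Icc 2 v, (f i - f (i-1)) = f v - f 1 := by
  have h1 : Icc 2 v = (range (v-1)).map ⟨fun j => j + 2, add_left_injective 2⟩ := by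
    ext k; simp only [Finset.mem_map, Finset.mem_range, Finset.mem_Icc,
      Function.Embedding.coeFn_mk]
    constructor
    · rintro ⟨h2, hv⟩; exact ⟨k - 2, by omega, by omega⟩
    · rintro ⟨a, ha, rfl⟩; omega
  rw [h1, Finset.sum_map]
  have key := Finset.sum_range_sub (fun j => f (j+1)) (v-1)
  simp only [Function.Embedding.coeFn_mk]
  have hv1 : v - 1 + 1 = v := by omega
  calc ∑ j ∈ range (v-1), (f (j+2) - f (j+2-1))
      = ∑ j ∈ range (v-1), (f (j+1+1) - f (j+1)) := by
        apply Finset.sum_congr rfl; intro j _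
        have : j + 2 - 1 = j + 1 := by omega
        rw [this]
    _ = f (v-1+1) - f 1 := key
    _ = f v - f 1 := by rw [hv1]

lemma JJ_append (l1 l2 : List ℕ) :
    JJ A B D u (l1 ++ l2) = JJ A B D u l1 ++ JJ A B D u l2 := by
  simp [JJ]

lemma JJ_join (L : List (List ℕ)) :
    JJ A B D u L.flatten = (L.map (JJ A B D u)).flatten := by
  induction L with
  | nil => simp [JJ]
  | cons l L ih => simp only [List.flatten_cons, JJ_append, ih, List.map_cons]

lemma JJ_replicate (nn g : ℕ) :
    JJ A B D u (List.replicate nn g) = (List.replicate nn (Gadget A B D u g)).flatten := by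
  simp [JJ]

lemma GadgetString_eq (m : ℕ) (e c : ℕ → ℕ) :
    GadgetString A B D u m e c
      = JJ A B D u (((List.range m).map (fun j => List.replicate (c (j+1)) (e (j+1)))).flatten) := by
  rw [JJ_join, List.map_map]
  unfold GadgetString
  congr 1
  apply List.map_congr_left
  intro j hj
  simp only [Function.comp_apply, JJ_replicate]

end S18

theorem stmt18 {α : Type*} [DecidableEq α] (A B D : α)
    (hAB : A ≠ B) (hAD : A ≠ D) (hBD : B ≠ D)
    (u m : ℕ) (hu : 2 ≤ u) (hm : 1 ≤ m) (x : ℕ → ℕ)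
    (hx : ∀ j ∈ Finset.Icc 1 m, x j ∈ Finset.Icc 2 u)
    (hmono : ∀ i ∈ Finset.Icc 1 m, ∀ j ∈ Finset.Icc 1 m, i < j → x i < x j) :
    ∀ v ∈ Finset.Icc 2 u,
      (v < x 1 →
        ∑ i ∈ Finset.Icc 2 v,
          dlt (GadgetString A B D u m x (fun j => if j = 1 then x 1 else x j - x (j-1))).length
            (fun k => (GadgetString A B D u m x
                (fun j => if j = 1 then x 1 else x j - x (j-1))).getD (k-1) D)
            ({A, B} : Finset α) i = 0) ∧
      (∀ j ∈ Finset.Icc 1 m, x j ≤ v →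
        (∀ j' ∈ Finset.Icc 1 m, x j' ≤ v → x j' ≤ x j) →
        ∑ i ∈ Finset.Icc 2 v,
          dlt (GadgetString A B D u m x (fun j => if j = 1 then x 1 else x j - x (j-1))).length
            (fun k => (GadgetString A B D u m x
                (fun j => if j = 1 then x 1 else x j - x (j-1))).getD (k-1) D)
            ({A, B} : Finset α) i = (x j : ℤ)) := by
  intro v hv
  rw [Finset.mem_Icc] at hv
  set c : ℕ → ℕ := fun j => if j = 1 then x 1 else x j - x (j-1) with hc
  set gl : List ℕ := ((List.range m).map (fun j => List.replicate (c (j+1)) (x (j+1)))).flatten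
    with hgl0
  have hGS : GadgetString A B D u m x c = S18.JJ A B D u gl := S18.GadgetString_eq A B D u m x c
  have hglmem : ∀ g ∈ gl, 2 ≤ g := by
    intro g hg
    rw [hgl0] at hg
    obtain ⟨l, hl, hgl'⟩ := List.mem_flatten.mp hg
    obtain ⟨j, hj, rfl⟩ := List.mem_map.mp hl
    rw [List.mem_range] at hj
    obtain ⟨-, rfl⟩ := List.mem_replicate.mp hgl'
    have := hx (j+1) (Finset.mem_Icc.mpr ⟨by omega, by omega⟩)
    rw [Finset.mem_Icc] at this
    omega
  have hx1le : ∀ j', 1 ≤ j' → j' ≤ m → x 1 ≤ x j' := by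
    intro j' h1 h2
    rcases Nat.eq_or_lt_of_le h1 with h | h
    · rw [← h]
    · exact le_of_lt (hmono 1 (Finset.mem_Icc.mpr ⟨le_refl _, hm⟩)
        j' (Finset.mem_Icc.mpr ⟨by omega, h2⟩) h)
  have hsum : ∑ i ∈ Finset.Icc 2 v,
      dlt (S18.JJ A B D u gl).length (fun k => (S18.JJ A B D u gl).getD (k-1) D) ({A, B} : Finset α) i
      = (List.countP (fun g => decide (g ≤ v)) gl : ℤ) := by
    have htel := S18.telescope
      (fun i => (lmco (S18.JJ A B D u gl).length
        (fun k => (S18.JJ A B D u gl).getD (k-1) D) ({A, B} : Finset α) i : ℤ)) v hv.1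
    calc ∑ i ∈ Finset.Icc 2 v,
        dlt (S18.JJ A B D u gl).length (fun k => (S18.JJ A B D u gl).getD (k-1) D)
          ({A, B} : Finset α) i
        = ∑ i ∈ Finset.Icc 2 v,
            ((lmco (S18.JJ A B D u gl).length (fun k => (S18.JJ A B D u gl).getD (k-1) D)
              ({A, B} : Finset α) i : ℤ)
            - (lmco (S18.JJ A B D u gl).length (fun k => (S18.JJ A B D u gl).getD (k-1) D)
              ({A, B} : Finset α) (i-1) : ℤ)) := by
          apply Finset.sum_congr rfl; intro i _; rfl
      _ = (lmco (S18.JJ A B D u gl).length (fun k => (S18.JJ A B D u gl).getD (k-1) D)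
              ({A, B} : Finset α) v : ℤ)
          - (lmco (S18.JJ A B D u gl).length (fun k => (S18.JJ A B D u gl).getD (k-1) D)
              ({A, B} : Finset α) 1 : ℤ) := htel
      _ = (List.countP (fun g => decide (g ≤ v)) gl : ℤ) := by
          rw [S18.lmco_one A B hAB, S18.lmco_JJ A B D u hAB hAD hBD hu gl hglmem v hv.1 hv.2]
          simp
  have hcount : List.countP (fun g => decide (g ≤ v)) gl
      = ∑ j ∈ Finset.range m, (if x (j+1) ≤ v then c (j+1) else 0) := by
    rw [hgl0, List.countP_flatten, List.map_map]
    have hs : ∀ g : ℕ → ℕ, ((List.range m).map g).sum = ∑ i ∈ Finset.range m, g i :=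
      fun g => rfl
    rw [hs]
    apply Finset.sum_congr rfl
    intro j _
    simp only [Function.comp_apply, List.countP_replicate, decide_eq_true_eq]
  have hpref : ∀ j, 1 ≤ j → j ≤ m → ∑ j' ∈ Finset.range j, c (j'+1) = x j := by
    intro j
    induction j with
    | zero => omega
    | succ j ih =>
      intro h1 h2
      by_cases hj : j = 0
      · subst hj
        simp [hc]
      · rw [Finset.sum_range_succ, ih (by omega) (by omega)]
        have hxm : x j < x (j+1) := hmono j (Finset.mem_Icc.mpr ⟨by omega, by omega⟩)
          (j+1) (Finset.mem_Icc.mpr ⟨by omega, by omega⟩) (by omega)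
        have hcval : c (j+1) = x (j+1) - x j := by
          rw [hc]
          simp only [if_neg (by omega : ¬ j + 1 = 1), Nat.add_sub_cancel]
        omega
  rw [hGS]
  constructor
  · intro hvlt
    rw [hsum, hcount]
    have : ∑ j ∈ Finset.range m, (if x (j+1) ≤ v then c (j+1) else 0) = 0 := by
      apply Finset.sum_eq_zero
      intro j hj
      rw [Finset.mem_range] at hj
      rw [if_neg]
      have := hx1le (j+1) (by omega) (by omega)
      omega
    rw [this]
    simp
  · intro j hj hxjv hmax
    rw [Finset.mem_Icc] at hj
    rw [hsum, hcount]
    have hcond : ∀ j' ∈ Finset.range m,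
        (if x (j'+1) ≤ v then c (j'+1) else 0) = (if j'+1 ≤ j then c (j'+1) else 0) := by
      intro j' hj'
      rw [Finset.mem_range] at hj'
      by_cases h : x (j'+1) ≤ v
      · rw [if_pos h, if_pos]
        by_contra hgt
        have h1 := hmax (j'+1) (Finset.mem_Icc.mpr ⟨by omega, by omega⟩) h
        have h2 := hmono j (Finset.mem_Icc.mpr ⟨by omega, by omega⟩)
          (j'+1) (Finset.mem_Icc.mpr ⟨by omega, by omega⟩) (by omega)
        omega
      · rw [if_neg h, if_neg]
        intro hle
        apply h
        rcases Nat.eq_or_lt_of_le hle with he | hlt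
        · rw [he]; exact hxjv
        · have := hmono (j'+1) (Finset.mem_Icc.mpr ⟨by omega, by omega⟩)
            j (Finset.mem_Icc.mpr ⟨by omega, by omega⟩) (by omega)
          omega
    rw [Finset.sum_congr rfl hcond]
    have hsub : ∑ j' ∈ Finset.range j, (if j'+1 ≤ j then c (j'+1) else 0)
        = ∑ j' ∈ Finset.range m, (if j'+1 ≤ j then c (j'+1) else 0) := by
      apply Finset.sum_subset
      · apply Finset.range_subset_range.mpr; omega
      · intro j' _ hj'
        rw [Finset.mem_range] at hj'
        rw [if_neg (by omega)]
    rw [← hsub]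
    have : ∑ j' ∈ Finset.range j, (if j'+1 ≤ j then c (j'+1) else 0)
        = ∑ j' ∈ Finset.range j, c (j'+1) := by
      apply Finset.sum_congr rfl
      intro j' hj'
      rw [Finset.mem_range] at hj'
      rw [if_pos (by omega)]
    rw [this, hpref j hj.1 hj.2]
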